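/- Let K be a field, let N, E ∈ K[X] with E(0) ≠ 0, let m be a positive integer, and set D := X^m · E. Let N/D = p + r/X^m + s/E be the ppfraction expansion of N/D in K(X) with respect to (X^m, E), so deg r < m and deg s < deg E. Then, expanding the rational function N/D as a formal Laurent series in K((X)) (via the canonical embedding of K(X) into the field of formal Laurent series at X = 0), for every i with 1 ≤ i ≤ m the coefficient of X^{−i} in this Laurent series equals the coefficient of X^{m−i} in r. -/

import Mathlib

open Polynomial

open LaurentSeries HahnSeries in
private lemma stmt9_aux_coe_alg {K : Type*} [Field K] (q : K[X]) :
    ((algebraMap K[X] (RatFunc K) q : RatFunc K) : LaurentSeries K) =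
      ((q : PowerSeries K) : LaurentSeries K) := by
  rw [RatFunc.coe_coe]; rfl

/-- For `D = X^m·E` with `E(0) ≠ 0`, the negative-degree coefficients of the
Laurent series expansion of `N/D` at `X = 0` are the coefficients of the
numerator `r` of the fractional part of `N/D` with respect to `X^m`:
`[X^(−i)] N/D = [X^(m−i)] r` for `1 ≤ i ≤ m`. -/
theorem stmt9 {K : Type*} [Field K] (N E : K[X]) (hE : E.eval 0 ≠ 0)
    (m : ℕ) (hm : 0 < m) (p r s : K[X])
    (hr : r.degree < (m : WithBot ℕ)) (hs : s.degree < E.degree)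
    (h : algebraMap K[X] (RatFunc K) N / algebraMap K[X] (RatFunc K) (X ^ m * E) =
      algebraMap K[X] (RatFunc K) p +
        algebraMap K[X] (RatFunc K) r / algebraMap K[X] (RatFunc K) (X ^ m) +
        algebraMap K[X] (RatFunc K) s / algebraMap K[X] (RatFunc K) E) :
    ∀ i : ℕ, 1 ≤ i → i ≤ m →
      ((algebraMap K[X] (RatFunc K) N /
          algebraMap K[X] (RatFunc K) (X ^ m * E) : RatFunc K) :
        LaurentSeries K).coeff (-(i : ℤ)) = r.coeff (m - i) := by
  intro i hi1 him
  have hEc : PowerSeries.constantCoeff (E : PowerSeries K) ≠ 0 := by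
    rwa [← PowerSeries.coeff_zero_eq_constantCoeff_apply, Polynomial.coeff_coe,
      Polynomial.coeff_zero_eq_eval_zero]
  rw [h, map_add, map_add, map_div₀, map_div₀,
    HahnSeries.coeff_add, HahnSeries.coeff_add]
  -- the polynomial part has zero negative coefficients
  have hp : ((algebraMap K[X] (RatFunc K) p : RatFunc K) : LaurentSeries K).coeff (-(i : ℤ)) = 0 := by
    rw [stmt9_aux_coe_alg, PowerSeries.coeff_coe, if_pos]
    omega
  -- the s / E part has zero negative coefficients
  have hsE : (((algebraMap K[X] (RatFunc K) s : RatFunc K) : LaurentSeries K) /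
      ((algebraMap K[X] (RatFunc K) E : RatFunc K) : LaurentSeries K)).coeff (-(i : ℤ)) = 0 := by
    rw [stmt9_aux_coe_alg, stmt9_aux_coe_alg]
    have hinv : ((E : PowerSeries K) : LaurentSeries K) *
        (((E : PowerSeries K)⁻¹ : PowerSeries K) : LaurentSeries K) = 1 := by
      rw [← PowerSeries.coe_mul, PowerSeries.mul_inv_cancel _ hEc, PowerSeries.coe_one]
    have hE0 : ((E : PowerSeries K) : LaurentSeries K) ≠ 0 := by
      intro h0
      rw [h0, zero_mul] at hinv
      exact zero_ne_one hinv
    rw [div_eq_mul_inv, ← eq_inv_of_mul_eq_one_right hinv, ← PowerSeries.coe_mul,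
      PowerSeries.coeff_coe, if_pos]
    omega
  -- the r / X^m part
  have hX : ((algebraMap K[X] (RatFunc K) (X ^ m) : RatFunc K) : LaurentSeries K) =
      HahnSeries.single (m : ℤ) 1 := by
    rw [map_pow, map_pow, RatFunc.algebraMap_X, RatFunc.coe_X, ← RatFunc.single_one_eq_pow]
  have hXinv : (HahnSeries.single (m : ℤ) (1 : K))⁻¹ = HahnSeries.single (-(m : ℤ)) 1 := by
    rw [HahnSeries.inv_single (m : ℤ) (1 : K), inv_one]
  have hrX : (((algebraMap K[X] (RatFunc K) r : RatFunc K) : LaurentSeries K) /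
      ((algebraMap K[X] (RatFunc K) (X ^ m) : RatFunc K) : LaurentSeries K)).coeff (-(i : ℤ))
      = r.coeff (m - i) := by
    rw [hX, div_eq_mul_inv, hXinv, mul_comm, stmt9_aux_coe_alg]
    have hcoeff : (-(i : ℤ)) = ((m - i : ℕ) : ℤ) + (-(m : ℤ)) := by omega
    rw [hcoeff, HahnSeries.coeff_single_mul_add, one_mul, PowerSeries.coeff_coe, if_neg]
    · simp [Polynomial.coeff_coe]
    · omega
  rw [hp, hsE, hrX, zero_add, add_zero]
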